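/- Let K₁, K₂ ≥ 0 and let A(t) = Σ_{ν≥1} A_ν t^ν and B(t) = Σ_{ν≥1} B_ν t^ν be real formal power series with zero constant term satisfying 0 ≤ A_ν ≤ K₁·M_ν and 0 ≤ B_ν ≤ K₂·M_ν for all ν ≥ 1. Then for every ν ≥ 1 the degree-ν coefficient of exp(A(t))·exp(B(t)) − 1 is at most λ^{-1}·(e^{(K₁+K₂)λ} − 1)·M_ν. -/

import Mathlib

open PowerSeries Finset

private lemma ps_coeff_mul_nonneg {f g : PowerSeries ℝ}
    (hf : ∀ n, 0 ≤ coeff (R := ℝ) n f) (hg : ∀ n, 0 ≤ coeff (R := ℝ) n g) (n : ℕ) :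
    0 ≤ coeff (R := ℝ) n (f * g) := by
  rw [PowerSeries.coeff_mul]
  exact Finset.sum_nonneg fun p _ => mul_nonneg (hf _) (hg _)

private lemma ps_coeff_mul_le {f f' g g' : PowerSeries ℝ}
    (hf0 : ∀ n, 0 ≤ coeff (R := ℝ) n f) (hf : ∀ n, coeff (R := ℝ) n f ≤ coeff (R := ℝ) n f')
    (hg0 : ∀ n, 0 ≤ coeff (R := ℝ) n g) (hg : ∀ n, coeff (R := ℝ) n g ≤ coeff (R := ℝ) n g') (n : ℕ) :
    coeff (R := ℝ) n (f * g) ≤ coeff (R := ℝ) n (f' * g') := by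
  rw [PowerSeries.coeff_mul, PowerSeries.coeff_mul]
  refine Finset.sum_le_sum fun p _ => ?_
  exact mul_le_mul (hf _) (hg _) (hg0 _) ((hf0 _).trans (hf _))

private lemma ps_coeff_pow_nonneg {f : PowerSeries ℝ} (hf : ∀ n, 0 ≤ coeff (R := ℝ) n f)
    (k : ℕ) : ∀ n, 0 ≤ coeff (R := ℝ) n (f ^ k) := by
  induction k with
  | zero => intro n; rw [pow_zero, PowerSeries.coeff_one]; split <;> norm_num
  | succ k ih => intro n; rw [pow_succ]; exact ps_coeff_mul_nonneg ih hf n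

private lemma ps_coeff_pow_le {f g : PowerSeries ℝ}
    (hf0 : ∀ n, 0 ≤ coeff (R := ℝ) n f) (hfg : ∀ n, coeff (R := ℝ) n f ≤ coeff (R := ℝ) n g)
    (k : ℕ) : ∀ n, coeff (R := ℝ) n (f ^ k) ≤ coeff (R := ℝ) n (g ^ k) := by
  induction k with
  | zero => intro n; exact le_rfl
  | succ k ih =>
    intro n
    rw [pow_succ, pow_succ]
    exact ps_coeff_mul_le (ps_coeff_pow_nonneg hf0 k) ih hf0 hfg n

private lemma ps_coeff_pow_eq_zero {f : PowerSeries ℝ} (hf : constantCoeff (R := ℝ) f = 0) :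
    ∀ k n : ℕ, n < k → coeff (R := ℝ) n (f ^ k) = 0 := by
  intro k
  induction k with
  | zero => intro n h; omega
  | succ k ih =>
    intro n h
    rw [pow_succ, PowerSeries.coeff_mul]
    refine Finset.sum_eq_zero fun p hp => ?_
    rw [Finset.HasAntidiagonal.mem_antidiagonal] at hp
    by_cases hcase : p.1 < k
    · rw [ih p.1 hcase, zero_mul]
    · have hp2 : p.2 = 0 := by omega
      rw [hp2, PowerSeries.coeff_zero_eq_constantCoeff, hf, mul_zero]

private lemma sum_inv_sq_le (n : ℕ) : ∑ μ ∈ Finset.range n, (1:ℝ) / ((μ:ℝ)+1)^2 ≤ 2 := by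
  have key : ∀ m : ℕ, ∑ μ ∈ Finset.range (m+1), (1:ℝ) / ((μ:ℝ)+1)^2 ≤ 2 - 1/((m:ℝ)+1) := by
    intro m
    induction m with
    | zero => norm_num
    | succ m ih =>
      rw [Finset.sum_range_succ]
      have h1 : (0:ℝ) < (m:ℝ) + 1 := by positivity
      have hstep : (1:ℝ) / ((m:ℝ)+1+1)^2 ≤ 1/((m:ℝ)+1) - 1/((m:ℝ)+1+1) := by
        rw [div_sub_div _ _ (by positivity) (by positivity),
          div_le_div_iff₀ (by positivity) (by positivity)]
        nlinarith
      push_cast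
      push_cast at ih
      linarith
  rcases n with _ | m
  · simp
  · have h := key m
    have h2 : (0:ℝ) < (m:ℝ)+1 := by positivity
    have h3 : (0:ℝ) ≤ 1/((m:ℝ)+1) := by positivity
    linarith

/-- The exponential `exp(A(t)) = Σ_{l≥0} A(t)^l / l!` of a formal power series, defined
coefficientwise (the sum of coefficients converges trivially when `A` has zero constant
term, since then only the terms with `l ≤ ν` contribute in degree `ν`). -/
noncomputable def pexp (A : PowerSeries ℝ) : PowerSeries ℝ :=
  PowerSeries.mk fun ν => ∑' (l : ℕ), (1 / (Nat.factorial l : ℝ)) * PowerSeries.coeff (R := ℝ) ν (A ^ l)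

/-- Fix `c > 0`, `λ = 1/c`, and `M ν = (1/(16c))·c^ν/ν²`. Let
`K₁, K₂ ≥ 0` and let `A(t)`, `B(t)` be real formal power series with zero constant term
with `0 ≤ A_ν ≤ K₁·M ν` and `0 ≤ B_ν ≤ K₂·M ν` for all `ν ≥ 1`. Then for every `ν ≥ 1`
the degree-`ν` coefficient of `exp(A(t))·exp(B(t)) − 1` is at most
`λ⁻¹·(e^{(K₁+K₂)λ} − 1)·M ν`. -/
theorem stmt_6 (c lam K₁ K₂ : ℝ) (hc : 0 < c) (hlam : lam = 1 / c)
    (hK₁ : 0 ≤ K₁) (hK₂ : 0 ≤ K₂)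
    (M : ℕ → ℝ) (hM : ∀ ν : ℕ, M ν = 1 / (16 * c) * c ^ ν / (ν : ℝ) ^ 2)
    (A B : PowerSeries ℝ)
    (hA0 : PowerSeries.constantCoeff (R := ℝ) A = 0) (hB0 : PowerSeries.constantCoeff (R := ℝ) B = 0)
    (hAnonneg : ∀ ν : ℕ, 1 ≤ ν → 0 ≤ PowerSeries.coeff (R := ℝ) ν A)
    (hAle : ∀ ν : ℕ, 1 ≤ ν → PowerSeries.coeff (R := ℝ) ν A ≤ K₁ * M ν)
    (hBnonneg : ∀ ν : ℕ, 1 ≤ ν → 0 ≤ PowerSeries.coeff (R := ℝ) ν B)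
    (hBle : ∀ ν : ℕ, 1 ≤ ν → PowerSeries.coeff (R := ℝ) ν B ≤ K₂ * M ν) :
    ∀ ν : ℕ, 1 ≤ ν →
      PowerSeries.coeff (R := ℝ) ν (pexp A * pexp B - 1)
        ≤ lam⁻¹ * (Real.exp ((K₁ + K₂) * lam) - 1) * M ν := by
  have hlam0 : 0 < lam := by rw [hlam]; positivity
  have hM0 : M 0 = 0 := by rw [hM]; norm_num
  have hMnonneg : ∀ n, 0 ≤ M n := by
    intro n; rw [hM]; positivity
  set F : PowerSeries ℝ := PowerSeries.mk M with hF
  have hFco : ∀ n, coeff (R := ℝ) n F = M n := fun n => PowerSeries.coeff_mk n M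
  -- the key convolution bound
  have hconv : ∀ n : ℕ, coeff (R := ℝ) n (F * F) ≤ lam * M n := by
    intro n
    rw [PowerSeries.coeff_mul]
    simp only [hFco]
    rcases Nat.eq_zero_or_pos n with rfl | hn
    · simp [hM0, hlam0.le]
    -- per-term bound
    have hterm : ∀ p ∈ Finset.HasAntidiagonal.antidiagonal n,
        M p.1 * M p.2 ≤ (1/(16*c))^2 * c^n * (2/(n:ℝ)^2) * (1/(p.1:ℝ)^2 + 1/(p.2:ℝ)^2) := by
      intro p hp
      rw [Finset.HasAntidiagonal.mem_antidiagonal] at hp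
      rcases Nat.eq_zero_or_pos p.1 with h1 | h1
      · have : M p.1 = 0 := by rw [h1, hM0]
        rw [this, zero_mul]; positivity
      rcases Nat.eq_zero_or_pos p.2 with h2 | h2
      · have : M p.2 = 0 := by rw [h2, hM0]
        rw [this, mul_zero]; positivity
      have ha : (1:ℝ) ≤ (p.1:ℝ) := by exact_mod_cast h1
      have hb : (1:ℝ) ≤ (p.2:ℝ) := by exact_mod_cast h2
      have hab : (p.1:ℝ) + (p.2:ℝ) = (n:ℝ) := by exact_mod_cast hp
      set a := (p.1:ℝ); set b := (p.2:ℝ)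
      have hpow : c ^ p.1 * c ^ p.2 = c ^ n := by rw [← pow_add, hp]
      rw [hM p.1, hM p.2]
      have key : 1/(a^2*b^2) ≤ 2/(a+b)^2 * (1/a^2 + 1/b^2) := by
        rw [div_add_div _ _ (by positivity) (by positivity), div_mul_div_comm,
          div_le_div_iff₀ (by positivity) (by positivity)]
        nlinarith [sq_nonneg (a-b), sq_nonneg (a*b), sq_nonneg (a+b), mul_pos (by positivity : (0:ℝ) < a^2) (by positivity : (0:ℝ) < b^2)]
      have hcn : (0:ℝ) < c ^ n := by positivity
      calc 1/(16*c) * c^p.1 / a^2 * (1/(16*c) * c^p.2 / b^2)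
          = (1/(16*c))^2 * c^n * (1/(a^2*b^2)) := by
            rw [← hpow]; field_simp
        _ ≤ (1/(16*c))^2 * c^n * (2/(a+b)^2 * (1/a^2 + 1/b^2)) := by
            apply mul_le_mul_of_nonneg_left key (by positivity)
        _ = (1/(16*c))^2 * c^n * (2/(n:ℝ)^2) * (1/a^2 + 1/b^2) := by
            rw [hab]; ring
    calc ∑ p ∈ Finset.HasAntidiagonal.antidiagonal n, M p.1 * M p.2
        ≤ ∑ p ∈ Finset.HasAntidiagonal.antidiagonal n,
            (1/(16*c))^2 * c^n * (2/(n:ℝ)^2) * (1/(p.1:ℝ)^2 + 1/(p.2:ℝ)^2) :=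
          Finset.sum_le_sum hterm
      _ = (1/(16*c))^2 * c^n * (2/(n:ℝ)^2) *
            ∑ p ∈ Finset.HasAntidiagonal.antidiagonal n, (1/(p.1:ℝ)^2 + 1/(p.2:ℝ)^2) := by
          rw [Finset.mul_sum]
      _ ≤ (1/(16*c))^2 * c^n * (2/(n:ℝ)^2) * 4 := by
          apply mul_le_mul_of_nonneg_left _ (by positivity)
          have e1 : ∑ p ∈ Finset.HasAntidiagonal.antidiagonal n, ((1:ℝ)/(p.1:ℝ)^2 + 1/(p.2:ℝ)^2)
              = ∑ k ∈ Finset.range (n+1), ((1:ℝ)/(k:ℝ)^2 + 1/((n-k : ℕ):ℝ)^2) :=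
            Finset.Nat.sum_antidiagonal_eq_sum_range_succ_mk _ n
          have e2 : ∑ k ∈ Finset.range (n+1), ((1:ℝ)/((n-k : ℕ):ℝ)^2)
              = ∑ k ∈ Finset.range (n+1), ((1:ℝ)/(k:ℝ)^2) := by
            have := Finset.sum_range_reflect (fun k => (1:ℝ)/(k:ℝ)^2) (n+1)
            rw [← this]
            apply Finset.sum_congr rfl
            intro k hk
            rw [Finset.mem_range] at hk
            congr 2
          have e3 : ∑ k ∈ Finset.range (n+1), ((1:ℝ)/(k:ℝ)^2) ≤ 2 := by
            rw [Finset.sum_range_succ' (fun k => (1:ℝ)/(k:ℝ)^2) n]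
            have hz : (1:ℝ)/((0:ℕ):ℝ)^2 = 0 := by norm_num
            rw [hz, add_zero]
            calc ∑ k ∈ Finset.range n, (1:ℝ)/(((k+1 : ℕ)):ℝ)^2
                = ∑ k ∈ Finset.range n, (1:ℝ)/((k:ℝ)+1)^2 := by
                  refine Finset.sum_congr rfl fun k _ => ?_
                  push_cast
                  ring
              _ ≤ 2 := sum_inv_sq_le n
          rw [e1, Finset.sum_add_distrib, e2]
          linarith
      _ ≤ lam * M n := by
          rw [hM n, hlam]
          have hc' : c ≠ 0 := hc.ne'
          have hn' : ((n:ℝ)) ≠ 0 := by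
            have : (0:ℝ) < (n:ℝ) := by exact_mod_cast hn
            exact this.ne'
          have key2 : (1/(16*c))^2 * c^n * (2/(n:ℝ)^2) * 4 = (1/32) * (c^n / (c^2 * (n:ℝ)^2)) := by
            field_simp
            ring
          have key3 : (1:ℝ)/c * (1/(16*c) * c^n / (n:ℝ)^2) = (1/16) * (c^n / (c^2 * (n:ℝ)^2)) := by
            field_simp
          rw [key2, key3]
          have hpos : (0:ℝ) ≤ c^n / (c^2*(n:ℝ)^2) := by positivity
          linarith
  -- powers of F
  have hFnonneg : ∀ n, 0 ≤ coeff (R := ℝ) n F := fun n => by rw [hFco]; exact hMnonneg n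
  have hFpow : ∀ l : ℕ, 1 ≤ l → ∀ n, coeff (R := ℝ) n (F ^ l) ≤ lam ^ (l-1) * M n := by
    intro l
    induction l with
    | zero => omega
    | succ l ih =>
      intro _ n
      rcases Nat.eq_zero_or_pos l with rfl | hl
      · simp only [zero_add, pow_one, hFco, Nat.sub_self, pow_zero, one_mul]
        exact le_rfl
      have step : coeff (R := ℝ) n (F ^ (l+1)) ≤ lam ^ (l-1) * coeff (R := ℝ) n (F * F) := by
        have : F ^ (l+1) = F ^ l * F := by rw [pow_succ]
        rw [this]
        have hle : ∀ m, coeff (R := ℝ) m (F ^ l) ≤ coeff (R := ℝ) m ((lam ^ (l-1)) • F) := by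
          intro m
          rw [PowerSeries.coeff_smul, smul_eq_mul, hFco]
          exact ih hl m
        calc coeff (R := ℝ) n (F ^ l * F)
            ≤ coeff (R := ℝ) n (((lam ^ (l-1)) • F) * F) :=
              ps_coeff_mul_le (ps_coeff_pow_nonneg hFnonneg l) hle hFnonneg (fun _ => le_rfl) n
          _ = lam ^ (l-1) * coeff (R := ℝ) n (F * F) := by
              rw [smul_mul_assoc, PowerSeries.coeff_smul, smul_eq_mul]
      calc coeff (R := ℝ) n (F ^ (l+1)) ≤ lam ^ (l-1) * coeff (R := ℝ) n (F * F) := step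
        _ ≤ lam ^ (l-1) * (lam * M n) := by
            apply mul_le_mul_of_nonneg_left (hconv n) (by positivity)
        _ = lam ^ (l+1-1) * M n := by
            rw [← mul_assoc, ← pow_succ]
            congr 2
            omega
  -- coefficient comparisons for A and B
  have hAco : ∀ n, coeff (R := ℝ) n A ≤ coeff (R := ℝ) n (K₁ • F) := by
    intro n
    rw [PowerSeries.coeff_smul, smul_eq_mul, hFco]
    rcases Nat.eq_zero_or_pos n with rfl | hn
    · rw [PowerSeries.coeff_zero_eq_constantCoeff, hA0, hM0, mul_zero]
    · exact hAle n hn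
  have hBco : ∀ n, coeff (R := ℝ) n B ≤ coeff (R := ℝ) n (K₂ • F) := by
    intro n
    rw [PowerSeries.coeff_smul, smul_eq_mul, hFco]
    rcases Nat.eq_zero_or_pos n with rfl | hn
    · rw [PowerSeries.coeff_zero_eq_constantCoeff, hB0, hM0, mul_zero]
    · exact hBle n hn
  have hAnn : ∀ n, 0 ≤ coeff (R := ℝ) n A := by
    intro n
    rcases Nat.eq_zero_or_pos n with rfl | hn
    · rw [PowerSeries.coeff_zero_eq_constantCoeff, hA0]
    · exact hAnonneg n hn
  have hBnn : ∀ n, 0 ≤ coeff (R := ℝ) n B := by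
    intro n
    rcases Nat.eq_zero_or_pos n with rfl | hn
    · rw [PowerSeries.coeff_zero_eq_constantCoeff, hB0]
    · exact hBnonneg n hn
  -- bound on coeff ν (A^k * B^l)
  have hABpow : ∀ k l n : ℕ, 1 ≤ k + l →
      coeff (R := ℝ) n (A ^ k * B ^ l) ≤ K₁ ^ k * K₂ ^ l * (lam ^ (k+l-1) * M n) := by
    intro k l n hkl
    have h1 : coeff (R := ℝ) n (A ^ k * B ^ l) ≤ coeff (R := ℝ) n ((K₁ • F) ^ k * (K₂ • F) ^ l) :=
      ps_coeff_mul_le (ps_coeff_pow_nonneg hAnn k)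
        (ps_coeff_pow_le hAnn hAco k) (ps_coeff_pow_nonneg hBnn l)
        (ps_coeff_pow_le hBnn hBco l) n
    have h2 : (K₁ • F) ^ k * (K₂ • F) ^ l = (K₁ ^ k * K₂ ^ l) • (F ^ (k+l)) := by
      rw [smul_pow, smul_pow, smul_mul_smul_comm, pow_add]
    rw [h2, PowerSeries.coeff_smul, smul_eq_mul] at h1
    calc coeff (R := ℝ) n (A ^ k * B ^ l) ≤ K₁ ^ k * K₂ ^ l * coeff (R := ℝ) n (F ^ (k+l)) := h1
      _ ≤ K₁ ^ k * K₂ ^ l * (lam ^ (k+l-1) * M n) :=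
          mul_le_mul_of_nonneg_left (hFpow (k+l) hkl n) (by positivity)
  -- main computation
  intro ν hν
  have hone : coeff (R := ℝ) ν (1 : PowerSeries ℝ) = 0 := by
    rw [PowerSeries.coeff_one, if_neg (by omega)]
  have hpexp : ∀ (C : PowerSeries ℝ), constantCoeff (R := ℝ) C = 0 → ∀ m : ℕ, m ≤ ν →
      coeff (R := ℝ) m (pexp C) = ∑ k ∈ Finset.range (ν+1),
        (1 / (Nat.factorial k : ℝ)) * coeff (R := ℝ) m (C ^ k) := by
    intro C hC0 m hm
    simp only [pexp, PowerSeries.coeff_mk]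
    apply tsum_eq_sum
    intro k hk
    rw [Finset.mem_range, not_lt] at hk
    rw [ps_coeff_pow_eq_zero hC0 k m (by omega), mul_zero]
  rw [map_sub, hone, sub_zero]
  set x := K₁ * lam with hxdef
  set y := K₂ * lam with hydef
  have hx : 0 ≤ x := by rw [hxdef]; positivity
  have hy : 0 ≤ y := by rw [hydef]; positivity
  have expand : coeff (R := ℝ) ν (pexp A * pexp B)
      = ∑ p ∈ (Finset.range (ν+1)) ×ˢ (Finset.range (ν+1)),
          (1/(p.1.factorial:ℝ)) * (1/(p.2.factorial:ℝ)) * coeff (R := ℝ) ν (A^p.1 * B^p.2) := by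
    rw [PowerSeries.coeff_mul, Finset.sum_product]
    have step1 : ∀ p ∈ Finset.HasAntidiagonal.antidiagonal ν,
        coeff (R := ℝ) p.1 (pexp A) * coeff (R := ℝ) p.2 (pexp B)
        = ∑ k ∈ Finset.range (ν+1), ∑ l ∈ Finset.range (ν+1),
            (1/(k.factorial:ℝ) * coeff (R := ℝ) p.1 (A^k)) * (1/(l.factorial:ℝ) * coeff (R := ℝ) p.2 (B^l)) := by
      intro p hp
      rw [Finset.HasAntidiagonal.mem_antidiagonal] at hp
      rw [hpexp A hA0 p.1 (by omega), hpexp B hB0 p.2 (by omega), Finset.sum_mul_sum]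
    rw [Finset.sum_congr rfl step1, Finset.sum_comm]
    refine Finset.sum_congr rfl fun k _ => ?_
    rw [Finset.sum_comm]
    refine Finset.sum_congr rfl fun l _ => ?_
    rw [PowerSeries.coeff_mul, Finset.mul_sum]
    refine Finset.sum_congr rfl fun p _ => ?_
    ring
  rw [expand]
  set sq := (Finset.range (ν+1)) ×ˢ (Finset.range (ν+1)) with hsq
  set t : ℕ × ℕ → ℝ := fun p =>
    (1/(p.1.factorial:ℝ)) * (1/(p.2.factorial:ℝ)) * coeff (R := ℝ) ν (A^p.1 * B^p.2) with ht
  set w : ℕ × ℕ → ℝ := fun p => x^p.1/(p.1.factorial:ℝ) * (y^p.2/(p.2.factorial:ℝ)) with hw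
  have h00 : ((0,0) : ℕ × ℕ) ∈ sq := by
    rw [hsq]; simp [Finset.mem_product]
  have ht00 : t (0,0) = 0 := by
    simp only [ht, pow_zero, one_mul, Nat.factorial_zero, Nat.cast_one]
    rw [hone]; ring
  have hsum_t : ∑ p ∈ sq, t p = ∑ p ∈ sq.erase (0,0), t p := by
    rw [← Finset.add_sum_erase sq t h00, ht00, zero_add]
  have hterm_bound : ∀ p ∈ sq.erase (0,0), t p ≤ lam⁻¹ * M ν * w p := by
    intro p hp
    have hpne : p ≠ (0,0) := (Finset.mem_erase.mp hp).1
    have hkl : 1 ≤ p.1 + p.2 := by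
      rcases Nat.eq_zero_or_pos (p.1 + p.2) with h | h
      · exfalso; apply hpne; have h1 : p.1 = 0 := by omega
        have h2 : p.2 = 0 := by omega
        exact Prod.ext h1 h2
      · exact h
    have hll : lam ^ (p.1+p.2-1) = lam⁻¹ * (lam^p.1 * lam^p.2) := by
      rw [← pow_add]
      have h1 : lam ^ (p.1+p.2) = lam * lam ^ (p.1+p.2-1) := by
        rw [← pow_succ']; congr 1; omega
      rw [h1, ← mul_assoc, inv_mul_cancel₀ hlam0.ne', one_mul]
    have hfact1 : (0:ℝ) < (p.1.factorial:ℝ) := by exact_mod_cast p.1.factorial_pos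
    have hfact2 : (0:ℝ) < (p.2.factorial:ℝ) := by exact_mod_cast p.2.factorial_pos
    calc t p ≤ (1/(p.1.factorial:ℝ)) * (1/(p.2.factorial:ℝ)) *
          (K₁ ^ p.1 * K₂ ^ p.2 * (lam ^ (p.1+p.2-1) * M ν)) := by
          apply mul_le_mul_of_nonneg_left (hABpow p.1 p.2 ν hkl) (by positivity)
      _ = lam⁻¹ * M ν * w p := by
          rw [hll, hw, hxdef, hydef]
          simp only [mul_pow]
          ring
  have hwsum : ∑ p ∈ sq.erase (0,0), w p ≤ Real.exp ((K₁ + K₂) * lam) - 1 := by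
    have hw00 : w (0,0) = 1 := by simp [hw]
    have e1 : ∑ p ∈ sq.erase (0,0), w p = (∑ p ∈ sq, w p) - 1 := by
      rw [← Finset.add_sum_erase sq w h00, hw00]; ring
    have e2 : ∑ p ∈ sq, w p
        = (∑ k ∈ Finset.range (ν+1), x^k/(k.factorial:ℝ)) *
          (∑ l ∈ Finset.range (ν+1), y^l/(l.factorial:ℝ)) := by
      rw [hsq, Finset.sum_mul_sum, ← Finset.sum_product']
    have e3 : (∑ k ∈ Finset.range (ν+1), x^k/(k.factorial:ℝ)) *
          (∑ l ∈ Finset.range (ν+1), y^l/(l.factorial:ℝ)) ≤ Real.exp x * Real.exp y := by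
      apply mul_le_mul (Real.sum_le_exp_of_nonneg hx _) (Real.sum_le_exp_of_nonneg hy _)
      · apply Finset.sum_nonneg; intro l _; positivity
      · exact (Real.exp_pos x).le
    have e4 : Real.exp x * Real.exp y = Real.exp ((K₁ + K₂) * lam) := by
      rw [← Real.exp_add, hxdef, hydef]; ring_nf
    rw [e1, e2]
    linarith [e3, e4.le, e4.ge]
  calc ∑ p ∈ sq, t p = ∑ p ∈ sq.erase (0,0), t p := hsum_t
    _ ≤ ∑ p ∈ sq.erase (0,0), lam⁻¹ * M ν * w p := Finset.sum_le_sum hterm_bound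
    _ = lam⁻¹ * M ν * ∑ p ∈ sq.erase (0,0), w p := by rw [Finset.mul_sum]
    _ ≤ lam⁻¹ * M ν * (Real.exp ((K₁ + K₂) * lam) - 1) := by
        exact mul_le_mul_of_nonneg_left hwsum
          (mul_nonneg (inv_nonneg.mpr hlam0.le) (hMnonneg ν))
    _ = lam⁻¹ * (Real.exp ((K₁ + K₂) * lam) - 1) * M ν := by ring
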